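/- Let 𝒩 be a complex normed linear space and f a map from 𝒩 into n×n complex matrices such that (i) for all A, B ∈ 𝒩 the map λ ↦ f(A + λB) is entire (holomorphic on all of ℂ, matrix-valued), and (ii) there is a monotone nondecreasing function g on [0,∞) with ‖f(A)‖ ≤ g(‖A‖_𝒩) for all A. Then for all A, B in 𝒩: ‖f(A) − f(B)‖ ≤ ‖A − B‖_𝒩 · g(‖A‖_𝒩 + ‖B‖_𝒩 + 1). -/

import Mathlib

open Matrix Metric

/-- The Hilbert–Schmidt (Frobenius) norm, a submultiplicative matrix norm. -/
noncomputable def hsNorm {n : ℕ} (M : Matrix (Fin n) (Fin n) ℂ) : ℝ :=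
  Real.sqrt (∑ i, ∑ j, Complex.normSq (M i j))

lemma hsNorm_nonneg {n : ℕ} (M : Matrix (Fin n) (Fin n) ℂ) : 0 ≤ hsNorm M :=
  Real.sqrt_nonneg _

lemma hs_cs {n : ℕ} (a b : Matrix (Fin n) (Fin n) ℂ) :
    ‖∑ i, ∑ j, (starRingEnd ℂ) (a i j) * b i j‖ ≤ hsNorm a * hsNorm b := by
  rw [← Fintype.sum_prod_type']
  calc ‖∑ p : Fin n × Fin n, (starRingEnd ℂ) (a p.1 p.2) * b p.1 p.2‖
      ≤ ∑ p : Fin n × Fin n, ‖(starRingEnd ℂ) (a p.1 p.2) * b p.1 p.2‖ := norm_sum_le _ _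
    _ = ∑ p : Fin n × Fin n, ‖a p.1 p.2‖ * ‖b p.1 p.2‖ := by
        simp [_root_.map_mul]
    _ ≤ Real.sqrt (∑ p : Fin n × Fin n, ‖a p.1 p.2‖ ^ 2) *
        Real.sqrt (∑ p : Fin n × Fin n, ‖b p.1 p.2‖ ^ 2) :=
        Real.sum_mul_le_sqrt_mul_sqrt _ _ _
    _ = hsNorm a * hsNorm b := by
        simp [hsNorm, Complex.sq_norm, ← Fintype.sum_prod_type']

theorem stmt8 {n : ℕ} (𝒩 : Type*) [NormedAddCommGroup 𝒩] [NormedSpace ℂ 𝒩]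
    (f : 𝒩 → Matrix (Fin n) (Fin n) ℂ) (g : ℝ → ℝ)
    (hg : MonotoneOn g (Set.Ici 0))
    (hf : ∀ A B : 𝒩, ∀ i j : Fin n,
      Differentiable ℂ (fun lam : ℂ => f (A + lam • B) i j))
    (hb : ∀ A : 𝒩, hsNorm (f A) ≤ g ‖A‖) :
    ∀ A B : 𝒩, hsNorm (f A - f B) ≤ ‖A - B‖ * g (‖A‖ + ‖B‖ + 1) := by
  intro A B
  set S : ℝ := ‖A‖ + ‖B‖ + 1 with hS
  have hS0 : (0:ℝ) ≤ S := by positivity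
  have hgS : 0 ≤ g S := by
    have h1 : (0:ℝ) ≤ g ‖A‖ := le_trans (hsNorm_nonneg (f A)) (hb A)
    have h2 : g ‖A‖ ≤ g S := hg (Set.mem_Ici.2 (norm_nonneg A)) (Set.mem_Ici.2 hS0)
      (by rw [hS]; nlinarith [norm_nonneg B])
    linarith
  by_cases hAB : A = B
  · subst hAB
    simp [hsNorm]
  · have hd : 0 < ‖A - B‖ := by rwa [norm_pos_iff, sub_ne_zero]
    set d : ℝ := ‖A - B‖ with hdd
    set M : 𝒩 := (2:ℂ)⁻¹ • (A + B) with hM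
    set D : 𝒩 := A - B with hD
    set C : Matrix (Fin n) (Fin n) ℂ := f A - f B with hC
    set ψ : ℂ → ℂ := fun lam => ∑ i, ∑ j, (starRingEnd ℂ) (C i j) * f (M + lam • D) i j with hψ
    have hψdiff : Differentiable ℂ ψ := by
      apply Differentiable.fun_sum
      intro i _
      apply Differentiable.fun_sum
      intro j _
      exact (hf M D i j).const_mul _
    have hA' : M + ((2:ℂ)⁻¹ : ℂ) • D = A := by rw [hM, hD]; module
    have hB' : M + (-(2:ℂ)⁻¹ : ℂ) • D = B := by rw [hM, hD]; module
    set N2 : ℝ := ∑ i, ∑ j, Complex.normSq (C i j) with hN2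
    have hN2nonneg : 0 ≤ N2 := Finset.sum_nonneg fun i _ => Finset.sum_nonneg fun j _ => Complex.normSq_nonneg _
    have hKey : ∀ z : ℂ, ‖z‖ ≤ 1/2 + 1/d → ‖ψ z‖ ≤ Real.sqrt N2 * g S := by
      intro z hz
      have h1 : ‖ψ z‖ ≤ hsNorm C * hsNorm (f (M + z • D)) := hs_cs C _
      have hnormarg : ‖M + z • D‖ ≤ S := by
        have : ‖M + z • D‖ ≤ ‖M‖ + ‖z‖ * d := by
          refine (norm_add_le _ _).trans ?_
          rw [hdd]; simp [norm_smul]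
        have hMle : ‖M‖ ≤ (‖A‖ + ‖B‖)/2 := by
          rw [hM, norm_smul]
          have : ‖(2:ℂ)⁻¹‖ = 1/2 := by norm_num
          rw [this]
          have := norm_add_le A B
          linarith
        have hdle : d ≤ ‖A‖ + ‖B‖ := by
          rw [hdd]; exact norm_sub_le A B
        have hzd : ‖z‖ * d ≤ d/2 + 1 := by
          have := mul_le_mul_of_nonneg_right hz hd.le
          have h1d : (1/d) * d = 1 := by field_simp
          nlinarith
        rw [hS]; nlinarith
      have h2 : hsNorm (f (M + z • D)) ≤ g S := by
        refine (hb _).trans ?_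
        exact hg (Set.mem_Ici.2 (norm_nonneg _)) (Set.mem_Ici.2 hS0) hnormarg
      have h3 : hsNorm C = Real.sqrt N2 := rfl
      calc ‖ψ z‖ ≤ hsNorm C * hsNorm (f (M + z • D)) := h1
        _ ≤ Real.sqrt N2 * g S := by
            rw [h3] at *
            exact mul_le_mul_of_nonneg_left h2 (Real.sqrt_nonneg _)
    -- Cauchy estimate for deriv on the closed ball of radius 1/2
    have hderiv : ∀ x ∈ closedBall (0:ℂ) (1/2), ‖deriv ψ x‖ ≤ d * (Real.sqrt N2 * g S) := by
      intro x hx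
      have hr : (0:ℝ) < 1/d := by positivity
      have hx' : ‖x‖ ≤ 1/2 := by simpa [mem_closedBall, Complex.dist_eq] using hx
      have := Complex.norm_deriv_le_of_forall_mem_sphere_norm_le (c := x) (R := 1/d)
        (C := Real.sqrt N2 * g S) hr hψdiff.diffContOnCl ?_
      · calc ‖deriv ψ x‖ ≤ (Real.sqrt N2 * g S) / (1/d) := this
          _ = d * (Real.sqrt N2 * g S) := by field_simp
      · intro z hz
        apply hKey
        have hzx : ‖z - x‖ = 1/d := by simpa [Metric.mem_sphere, Complex.dist_eq] using hz
        calc ‖z‖ = ‖(z - x) + x‖ := by ring_nf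
          _ ≤ ‖z - x‖ + ‖x‖ := norm_add_le _ _
          _ ≤ 1/d + 1/2 := by rw [hzx]; linarith
          _ = 1/2 + 1/d := by ring
    -- Mean value
    have hmv : ‖ψ ((2:ℂ)⁻¹) - ψ (-(2:ℂ)⁻¹)‖ ≤ d * (Real.sqrt N2 * g S) * 1 := by
      have hconv : Convex ℝ (closedBall (0:ℂ) (1/2)) := convex_closedBall _ _
      have hmem1 : ((2:ℂ)⁻¹) ∈ closedBall (0:ℂ) (1/2) := by
        simp [mem_closedBall, Complex.dist_eq]
      have hmem2 : (-(2:ℂ)⁻¹) ∈ closedBall (0:ℂ) (1/2) := by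
        simp [mem_closedBall, Complex.dist_eq]
      have := hconv.norm_image_sub_le_of_norm_deriv_le
        (fun x _ => hψdiff.differentiableAt) hderiv hmem2 hmem1
      refine this.trans ?_
      have : ‖((2:ℂ)⁻¹) - (-(2:ℂ)⁻¹)‖ = 1 := by
        norm_num
      rw [this]
    have hval : ψ ((2:ℂ)⁻¹) - ψ (-(2:ℂ)⁻¹) = (N2 : ℂ) := by
      rw [hψ]
      simp only [hA', hB']
      rw [← Finset.sum_sub_distrib]
      rw [hN2]
      push_cast
      refine Finset.sum_congr rfl fun i _ => ?_
      rw [← Finset.sum_sub_distrib]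
      refine Finset.sum_congr rfl fun j _ => ?_
      rw [← mul_sub]
      have : f A i j - f B i j = C i j := by simp [hC]
      rw [this, Complex.normSq_eq_conj_mul_self]
    have hmain : N2 ≤ d * (Real.sqrt N2 * g S) := by
      have := hmv
      rw [hval] at this
      simpa [Complex.norm_real, abs_of_nonneg hN2nonneg] using this
    have hgoal : Real.sqrt N2 ≤ d * g S := by
      rcases eq_or_lt_of_le (Real.sqrt_nonneg N2) with h0 | h0
      · rw [← h0]; positivity
      · have hsq : Real.sqrt N2 * Real.sqrt N2 = N2 := Real.mul_self_sqrt hN2nonneg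
        nlinarith
    have : hsNorm (f A - f B) = Real.sqrt N2 := rfl
    rw [this]
    calc Real.sqrt N2 ≤ d * g S := hgoal
      _ = ‖A - B‖ * g (‖A‖ + ‖B‖ + 1) := by rw [hdd, hS]
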